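/- Fix N ≥ 1 and r ≥ 1, and let λ be a partition. In the polynomial ring ℤ[x_1,…,x_N], the product of Schur polynomials satisfies s_{(r)}(x_1,…,x_N) · s_λ(x_1,…,x_N) = Σ_ν s_ν(x_1,…,x_N), where the sum ranges over all partitions ν containing λ such that |ν| = |λ| + r and ν/λ is a horizontal strip (i.e. ν_{i+1} ≤ λ_i for all i). -/

import Mathlib

open MvPolynomial

/-- A partition: a weakly decreasing sequence of nonnegative integers, eventually zero
(0-based: `l 0` is `λ₁`). -/
def IsPartition (l : ℕ → ℕ) : Prop :=
  Antitone l ∧ ∃ M, ∀ i, M ≤ i → l i = 0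

/-- The size `|λ| = Σ λᵢ` of a partition. -/
noncomputable def partSize (l : ℕ → ℕ) : ℕ := ∑ᶠ i, l i

/-- Membership of the cell `p = (row, column)` (0-based) in the skew shape `hi / lo`. -/
def InSkewShape (lo hi : ℕ → ℕ) (p : ℕ × ℕ) : Prop :=
  lo p.1 ≤ p.2 ∧ p.2 < hi p.1

/-- A semistandard Young tableau of skew shape `hi / lo`, encoded as a function on cells
`(row, column)` (0-based) assigning the entry to each cell of the shape and `0` elsewhere:
entries in the shape are positive, rows weakly increase left to right, and columns
strictly increase downward. -/
def IsSkewSSYT (lo hi : ℕ → ℕ) (T : ℕ × ℕ → ℕ) : Prop :=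
  (∀ p, InSkewShape lo hi p → 1 ≤ T p) ∧
  (∀ p, ¬ InSkewShape lo hi p → T p = 0) ∧
  (∀ i j j', InSkewShape lo hi (i, j) → j ≤ j' → InSkewShape lo hi (i, j') →
    T (i, j) ≤ T (i, j')) ∧
  (∀ i j, InSkewShape lo hi (i, j) → InSkewShape lo hi (i + 1, j) →
    T (i, j) < T (i + 1, j))

/-- The number of entries of the tableau `T` equal to `m` (for `m ≥ 1` this counts cells
of the shape, since `T` vanishes off the shape). -/
noncomputable def entryCount (T : ℕ × ℕ → ℕ) (m : ℕ) : ℕ :=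
  Set.ncard {p : ℕ × ℕ | T p = m}

/-- `T` has content `μ`: exactly `μ_m` entries equal `m` for each `m ≥ 1`
(`mu` is 0-based, so `mu m` is `μ_{m+1}`). -/
def HasContent (T : ℕ × ℕ → ℕ) (mu : ℕ → ℕ) : Prop :=
  ∀ m : ℕ, entryCount T (m + 1) = mu m

/-- The monomial weight `x^T = ∏ᵢ xᵢ^(number of entries of `T` equal to `i`)`. -/
noncomputable def tabWeight (N : ℕ) (T : ℕ × ℕ → ℕ) : MvPolynomial (Fin N) ℤ :=
  ∏ i : Fin N, (X i) ^ entryCount T (i.val + 1)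

/-- The Schur polynomial `s_λ(x_1, …, x_N) = Σ_T x^T`, summed over all semistandard
Young tableaux of shape `λ` with entries in `{1, …, N}`. -/
noncomputable def schurPoly (N : ℕ) (lam : ℕ → ℕ) : MvPolynomial (Fin N) ℤ :=
  ∑ᶠ T ∈ {T : ℕ × ℕ → ℕ | IsSkewSSYT (fun _ => 0) lam T ∧ ∀ p, T p ≤ N}, tabWeight N T

/-- Count of the letter `m` in the suffix of the reading word of `T` beginning at position
`(i, j)`: the reading word concatenates rows bottom-to-top, so this suffix consists of the
cells of row `i` in columns `≥ j` together with all cells in rows `< i`. -/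
noncomputable def suffixCount (T : ℕ × ℕ → ℕ) (i j m : ℕ) : ℕ :=
  Set.ncard {p : ℕ × ℕ | (p.1 < i ∨ (p.1 = i ∧ j ≤ p.2)) ∧ T p = m}

/-- The reading word of `T` (rows concatenated bottom to top, each left to right) is
Yamanouchi: every suffix contains at least as many letters `m` as letters `m + 1`. -/
def IsYamanouchi (T : ℕ × ℕ → ℕ) : Prop :=
  ∀ i j m : ℕ, suffixCount T i j (m + 2) ≤ suffixCount T i j (m + 1)

/-- The one-row partition `(r)`. -/
def oneRow (r : ℕ) : ℕ → ℕ := fun i => if i = 0 then r else 0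
namespace PieriAux

open Finset

/-! ### Basic facts about shapes and sizes -/

lemma inShape_iff (lam : ℕ → ℕ) (p : ℕ × ℕ) :
    InSkewShape (fun _ => 0) lam p ↔ p.2 < lam p.1 := by
  simp [InSkewShape]

/-- The cells of the straight shape `lam`, assuming rows `≥ M` are empty. -/
def shapeF (M : ℕ) (lam : ℕ → ℕ) : Finset (ℕ × ℕ) :=
  (Finset.range M).biUnion fun i =>
    (Finset.range (lam i)).map ⟨fun j => (i, j), fun a b h => by simpa using h⟩

lemma mem_shapeF {M : ℕ} {lam : ℕ → ℕ} {p : ℕ × ℕ} :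
    p ∈ shapeF M lam ↔ p.1 < M ∧ p.2 < lam p.1 := by
  obtain ⟨i, j⟩ := p
  simp only [shapeF, mem_biUnion, mem_range, mem_map, Function.Embedding.coeFn_mk]
  constructor
  · rintro ⟨a, ha, b, hb, h⟩
    obtain ⟨rfl, rfl⟩ := Prod.mk.injEq .. ▸ h
    exact ⟨ha, hb⟩
  · rintro ⟨h1, h2⟩
    exact ⟨i, h1, j, h2, rfl⟩

lemma card_shapeF (M : ℕ) (lam : ℕ → ℕ) :
    (shapeF M lam).card = ∑ i ∈ Finset.range M, lam i := by
  rw [shapeF, card_biUnion]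
  · simp
  · intro a _ b _ hab
    simp only [disjoint_left]
    intro p hp hq
    simp only [mem_map, Function.Embedding.coeFn_mk] at hp hq
    obtain ⟨x, _, rfl⟩ := hp
    obtain ⟨y, _, h⟩ := hq
    exact hab ((Prod.mk.injEq .. ▸ h).1.symm)

lemma shape_set_eq {M : ℕ} {lam : ℕ → ℕ} (hM : ∀ i, M ≤ i → lam i = 0) :
    {p : ℕ × ℕ | InSkewShape (fun _ => 0) lam p} = ↑(shapeF M lam) := by
  ext p
  simp only [Set.mem_setOf_eq, inShape_iff, coe_mem, mem_coe, mem_shapeF]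
  constructor
  · intro h
    refine ⟨?_, h⟩
    by_contra hc
    rw [hM p.1 (le_of_not_gt hc)] at h
    omega
  · exact fun h => h.2

lemma partSize_eq {M : ℕ} {lam : ℕ → ℕ} (hM : ∀ i, M ≤ i → lam i = 0) :
    partSize lam = ∑ i ∈ Finset.range M, lam i := by
  apply finsum_eq_sum_of_support_subset
  intro i hi
  simp only [Function.mem_support] at hi
  simp only [coe_range, Set.mem_Iio]
  by_contra hc
  exact hi (hM i (le_of_not_gt hc))

lemma partSize_mono {M : ℕ} {mu lam : ℕ → ℕ} (h : ∀ i, mu i ≤ lam i)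
    (hM : ∀ i, M ≤ i → lam i = 0) : partSize mu ≤ partSize lam := by
  have hM' : ∀ i, M ≤ i → mu i = 0 := fun i hi => by have := h i; rw [hM i hi] at this; omega
  rw [partSize_eq hM, partSize_eq hM']
  exact Finset.sum_le_sum fun i _ => h i

lemma IsPartition.bound {l : ℕ → ℕ} (h : IsPartition l) : ∃ M, ∀ i, M ≤ i → l i = 0 := h.2

lemma le_partSize_of_ne {l : ℕ → ℕ} (h : IsPartition l) {j : ℕ} (hj : l j ≠ 0) :
    j < partSize l := by
  obtain ⟨M, hM⟩ := h.2
  have hjM : j < M := by by_contra hc; exact hj (hM j (le_of_not_gt hc))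
  rw [partSize_eq hM]
  calc j < ∑ i ∈ Finset.range (j + 1), 1 := by simp
    _ ≤ ∑ i ∈ Finset.range (j + 1), l i := by
        refine Finset.sum_le_sum fun i hi => ?_
        simp only [mem_range] at hi
        have : l j ≤ l i := h.1 (by omega)
        omega
    _ ≤ ∑ i ∈ Finset.range M, l i := Finset.sum_le_sum_of_subset (by simp [range_subset]; omega)

lemma part_le_partSize {l : ℕ → ℕ} (h : IsPartition l) (j : ℕ) : l j ≤ partSize l := by
  obtain ⟨M, hM⟩ := h.2
  have h0 : l j ≤ l 0 := h.1 (Nat.zero_le j)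
  have : l 0 ≤ partSize l := by
    rw [partSize_eq (M := M + 1) (fun i hi => hM i (by omega))]
    exact Finset.single_le_sum (f := l) (fun i _ => Nat.zero_le _) (by simp)
  omega

/-! ### Finiteness -/

lemma finite_bdd {α : Type*} (b : α → ℕ) (hb : {a | b a ≠ 0}.Finite) :
    {f : α → ℕ | ∀ a, f a ≤ b a}.Finite := by
  haveI := hb.to_subtype
  rw [← Set.finite_coe_iff]
  refine Finite.of_injective
    (fun f => fun a : {a | b a ≠ 0} => (⟨f.1 a, Nat.lt_succ_of_le (f.2 a)⟩ : Fin (b a + 1))) ?_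
  intro f g h
  apply Subtype.ext
  funext a
  by_cases ha : b a = 0
  · have h1 := f.2 a; have h2 := g.2 a; omega
  · simpa using congrFun h ⟨a, ha⟩

/-- The set of SSYT of straight shape `lam` with entries at most `K`. -/
def SSet (K : ℕ) (lam : ℕ → ℕ) : Set ((ℕ × ℕ) → ℕ) :=
  {T | IsSkewSSYT (fun _ => 0) lam T ∧ ∀ p, T p ≤ K}

lemma finite_SSet (K : ℕ) {M : ℕ} {lam : ℕ → ℕ} (hM : ∀ i, M ≤ i → lam i = 0) :
    (SSet K lam).Finite := by
  refine (finite_bdd (fun p : ℕ × ℕ => if p.2 < lam p.1 then K else 0) ?_).subset ?_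
  · refine ((shapeF M lam).finite_toSet).subset ?_
    intro p hp
    simp only [Set.mem_setOf_eq] at hp
    simp only [mem_coe, mem_shapeF]
    by_cases h : p.2 < lam p.1
    · refine ⟨?_, h⟩
      by_contra hc
      rw [hM p.1 (le_of_not_gt hc)] at h; omega
    · simp [h] at hp
  · rintro T ⟨hT, hTK⟩
    intro p
    by_cases h : p.2 < lam p.1
    · simpa [h] using hTK p
    · simp only [h, if_false, Nat.le_zero]
      exact hT.2.1 p (by rw [inShape_iff]; exact h)

/-- The branching set: partitions `mu` with `lam/mu` a horizontal strip. -/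
def Br (lam : ℕ → ℕ) : Set (ℕ → ℕ) :=
  {mu | IsPartition mu ∧ (∀ i, mu i ≤ lam i) ∧ ∀ i, lam (i + 1) ≤ mu i}

/-- The Pieri set: partitions `nu ⊇ lam` with `nu/lam` a horizontal strip of size `r`. -/
def HS (lam : ℕ → ℕ) (r : ℕ) : Set (ℕ → ℕ) :=
  {nu | IsPartition nu ∧ (∀ i, lam i ≤ nu i) ∧
    partSize nu = partSize lam + r ∧ ∀ i, nu (i + 1) ≤ lam i}

lemma finite_Br {M : ℕ} {lam : ℕ → ℕ} (hM : ∀ i, M ≤ i → lam i = 0) : (Br lam).Finite := by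
  refine (finite_bdd lam ?_).subset ?_
  · exact (Finset.range M).finite_toSet.subset fun i hi => by
      simp only [Set.mem_setOf_eq] at hi
      simp only [mem_coe, mem_range]
      by_contra hc; exact hi (hM i (le_of_not_gt hc))
  · exact fun mu hmu => hmu.2.1

lemma finite_HS (lam : ℕ → ℕ) (r : ℕ) : (HS lam r).Finite := by
  set C := partSize lam + r with hC
  refine (finite_bdd (fun i => if i < C then C else 0) ?_).subset ?_
  · exact (Finset.range C).finite_toSet.subset fun i hi => by
      simp only [Set.mem_setOf_eq] at hi
      simp only [mem_coe, mem_range]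
      by_contra hc; simp [hc] at hi
  · rintro nu ⟨hnu, _, hsize, _⟩ i
    by_cases h : nu i = 0
    · simp [h]
    · have h1 := le_partSize_of_ne hnu h
      have h2 := part_le_partSize hnu i
      rw [hsize] at h1 h2
      simp only [hC] at *
      simp [h1, h2]

/-! ### Sum plumbing -/

open scoped Classical in
/-- Pick a `Finset` underlying a set, when it is finite. -/
noncomputable def fsetOf {α : Type*} (s : Set α) : Finset α :=
  if h : s.Finite then h.toFinset else ∅

lemma mem_fsetOf {α : Type*} {s : Set α} (h : s.Finite) {x : α} : x ∈ fsetOf s ↔ x ∈ s := by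
  rw [fsetOf, dif_pos h, Set.Finite.mem_toFinset]

lemma mem_of_mem_fsetOf {α : Type*} {s : Set α} {x : α} (hx : x ∈ fsetOf s) : x ∈ s := by
  by_cases h : s.Finite
  · rwa [mem_fsetOf h] at hx
  · rw [fsetOf, dif_neg h] at hx; exact absurd hx (Finset.notMem_empty x)

lemma finsum_mem_eq_fsetOf_sum {α M : Type*} [AddCommMonoid M] {s : Set α} (h : s.Finite)
    (f : α → M) : ∑ᶠ x ∈ s, f x = ∑ x ∈ fsetOf s, f x := by
  conv_lhs => rw [← Set.Finite.coe_toFinset h]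
  rw [finsum_mem_coe_finset]
  apply Finset.sum_congr _ (fun _ _ => rfl)
  ext x
  rw [Set.Finite.mem_toFinset, mem_fsetOf h]

/-- Schur polynomial in `N` variables with entries bounded by `K`. -/
noncomputable def sch (N K : ℕ) (lam : ℕ → ℕ) : MvPolynomial (Fin N) ℤ :=
  ∑ᶠ T ∈ SSet K lam, tabWeight N T

lemma schurPoly_eq_sch (N : ℕ) (lam : ℕ → ℕ) : schurPoly N lam = sch N N lam := rfl

lemma sch_eq_sum (N K : ℕ) {lam : ℕ → ℕ} (hlam : ∃ M, ∀ i, M ≤ i → lam i = 0) :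
    sch N K lam = ∑ T ∈ fsetOf (SSet K lam), tabWeight N T := by
  obtain ⟨M, hM⟩ := hlam
  exact finsum_mem_eq_fsetOf_sum (finite_SSet K hM) _

end PieriAux
namespace PieriAux

open Finset

/-! ### Branching rule: combinatorics -/

lemma filter_downset {n : ℕ} {P : ℕ → Prop} [DecidablePred P]
    (hP : ∀ j j', j ≤ j' → j' < n → P j' → P j) :
    (Finset.range n).filter P = Finset.range (((Finset.range n).filter P).card) := by
  ext j
  simp only [mem_filter, mem_range]
  constructor
  · rintro ⟨hjn, hj⟩
    have hsub : Finset.range (j + 1) ⊆ (Finset.range n).filter P := by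
      intro x hx
      simp only [mem_range] at hx
      simp only [mem_filter, mem_range]
      exact ⟨by omega, hP x j (by omega) hjn hj⟩
    have := Finset.card_le_card hsub
    simp only [card_range] at this
    omega
  · intro hj
    by_contra hc
    push_neg at hc
    have hsub : (Finset.range n).filter P ⊆ Finset.range j := by
      intro x hx
      simp only [mem_filter, mem_range] at hx
      simp only [mem_range]
      by_contra hxj
      push_neg at hxj
      by_cases hjn : j < n
      · exact (hc hjn) (hP j x hxj hx.1 hx.2)
      · omega
    have := Finset.card_le_card hsub
    simp only [card_range] at this
    omega

/-- The shape of the sub-tableau of `T` with entries `≤ K`. -/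
def muT (K : ℕ) (lam : ℕ → ℕ) (T : (ℕ × ℕ) → ℕ) : ℕ → ℕ :=
  fun i => ((Finset.range (lam i)).filter (fun j => T (i, j) ≤ K)).card

/-- The sub-tableau of `T` with entries `≤ K`. -/
def restr (K : ℕ) (T : (ℕ × ℕ) → ℕ) : (ℕ × ℕ) → ℕ :=
  fun p => if T p ≤ K then T p else 0

/-- Extend a tableau `S` of shape `mu` to one of shape `lam` by entries `K + 1`. -/
def extT (K : ℕ) (lam mu : ℕ → ℕ) (S : (ℕ × ℕ) → ℕ) : (ℕ × ℕ) → ℕ :=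
  fun p => if p.2 < lam p.1 then (if p.2 < mu p.1 then S p else K + 1) else 0

lemma muT_le (K : ℕ) (lam : ℕ → ℕ) (T : (ℕ × ℕ) → ℕ) (i : ℕ) :
    muT K lam T i ≤ lam i :=
  (Finset.card_filter_le _ _).trans (by simp)

lemma mem_muT {K : ℕ} {lam : ℕ → ℕ} {T : (ℕ × ℕ) → ℕ} (hT : T ∈ SSet (K + 1) lam)
    {i j : ℕ} (hj : j < lam i) : T (i, j) ≤ K ↔ j < muT K lam T i := by
  have hd : ∀ a b : ℕ, a ≤ b → b < lam i → T (i, b) ≤ K → T (i, a) ≤ K := by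
    intro a b hab hb hbK
    have := hT.1.2.2.1 i a b (by rw [inShape_iff]; exact lt_of_le_of_lt hab hb) hab
      (by rw [inShape_iff]; exact hb)
    omega
  have heq := filter_downset (n := lam i) (P := fun j => T (i, j) ≤ K) hd
  constructor
  · intro h
    have : j ∈ (Finset.range (lam i)).filter (fun j => T (i, j) ≤ K) := by
      simp only [mem_filter, mem_range]; exact ⟨hj, h⟩
    rw [heq, mem_range] at this
    exact this
  · intro h
    have : j ∈ (Finset.range (lam i)).filter (fun j => T (i, j) ≤ K) := by
      rw [heq, mem_range]; exact h
    exact (mem_filter.mp this).2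

lemma lam_succ_le_muT {K : ℕ} {lam : ℕ → ℕ} {T : (ℕ × ℕ) → ℕ} (hT : T ∈ SSet (K + 1) lam)
    (hlam : IsPartition lam) (i : ℕ) : lam (i + 1) ≤ muT K lam T i := by
  have hsub : Finset.range (lam (i + 1)) ⊆
      (Finset.range (lam i)).filter (fun j => T (i, j) ≤ K) := by
    intro j hj
    rw [mem_range] at hj
    have hji : j < lam i := lt_of_lt_of_le hj (hlam.1 (by omega))
    simp only [mem_filter, mem_range]
    refine ⟨hji, ?_⟩
    have hcol := hT.1.2.2.2 i j (by rw [inShape_iff]; exact hji) (by rw [inShape_iff]; exact hj)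
    have hbd := hT.2 (i + 1, j)
    omega
  have := Finset.card_le_card hsub
  simpa [muT] using this

lemma muT_mem_Br {K : ℕ} {lam : ℕ → ℕ} {T : (ℕ × ℕ) → ℕ} (hT : T ∈ SSet (K + 1) lam)
    (hlam : IsPartition lam) : muT K lam T ∈ Br lam := by
  obtain ⟨M, hM⟩ := hlam.2
  refine ⟨⟨antitone_nat_of_succ_le fun i => ?_, M, fun i hi => ?_⟩,
    fun i => muT_le K lam T i, fun i => lam_succ_le_muT hT hlam i⟩
  · exact le_trans (muT_le K lam T (i + 1)) (lam_succ_le_muT hT hlam i)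
  · have := muT_le K lam T i
    rw [hM i hi] at this
    omega

lemma shape_muT {K : ℕ} {lam : ℕ → ℕ} {T : (ℕ × ℕ) → ℕ} (hT : T ∈ SSet (K + 1) lam)
    {p : ℕ × ℕ} (hp : p.2 < muT K lam T p.1) : p.2 < lam p.1 ∧ T p ≤ K := by
  have h1 : p.2 < lam p.1 := lt_of_lt_of_le hp (muT_le K lam T p.1)
  exact ⟨h1, (mem_muT hT h1).mpr hp⟩

lemma restr_mem_SSet {K : ℕ} {lam : ℕ → ℕ} {T : (ℕ × ℕ) → ℕ} (hT : T ∈ SSet (K + 1) lam) :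
    restr K T ∈ SSet K (muT K lam T) := by
  have hval : ∀ p : ℕ × ℕ, p.2 < muT K lam T p.1 → restr K T p = T p := by
    intro p hp
    rw [restr, if_pos (shape_muT hT hp).2]
  refine ⟨⟨?_, ?_, ?_, ?_⟩, ?_⟩
  · intro p hp
    rw [inShape_iff] at hp
    rw [hval p hp]
    exact hT.1.1 p (by rw [inShape_iff]; exact (shape_muT hT hp).1)
  · intro p hp
    rw [inShape_iff] at hp
    push_neg at hp
    by_cases h : p.2 < lam p.1
    · have : ¬ T p ≤ K := fun hc => absurd ((mem_muT hT h).mp hc) (by omega)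
      rw [restr, if_neg this]
    · have : T p = 0 := hT.1.2.1 p (by rw [inShape_iff]; exact h)
      simp [restr, this]
  · intro i j j' h1 hjj h2
    rw [inShape_iff] at h1 h2
    rw [hval _ h1, hval _ h2]
    exact hT.1.2.2.1 i j j' (by rw [inShape_iff]; exact (shape_muT hT h1).1) hjj
      (by rw [inShape_iff]; exact (shape_muT hT h2).1)
  · intro i j h1 h2
    rw [inShape_iff] at h1 h2
    rw [hval _ h1, hval _ h2]
    exact hT.1.2.2.2 i j (by rw [inShape_iff]; exact (shape_muT hT h1).1)
      (by rw [inShape_iff]; exact (shape_muT hT h2).1)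
  · intro p
    rw [restr]
    split <;> omega

lemma count_restr {K : ℕ} {T : (ℕ × ℕ) → ℕ} {m : ℕ}
    (h1 : 1 ≤ m) (h2 : m ≤ K) : entryCount (restr K T) m = entryCount T m := by
  unfold entryCount
  congr 1
  ext p
  simp only [Set.mem_setOf_eq, restr]
  constructor
  · intro h
    by_cases hc : T p ≤ K
    · rwa [if_pos hc] at h
    · rw [if_neg hc] at h; omega
  · intro h
    rw [if_pos (by omega)]
    exact h

lemma count_zero_of_gt {T : (ℕ × ℕ) → ℕ} {B m : ℕ} (hbd : ∀ p, T p ≤ B) (h : B < m) :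
    entryCount T m = 0 := by
  unfold entryCount
  have : {p : ℕ × ℕ | T p = m} = ∅ := by
    ext p
    simp only [Set.mem_setOf_eq, Set.mem_empty_iff_false, iff_false]
    have := hbd p
    omega
  rw [this, Set.ncard_empty]

lemma count_top {K M : ℕ} {lam : ℕ → ℕ} {T : (ℕ × ℕ) → ℕ} (hT : T ∈ SSet (K + 1) lam)
    (hM : ∀ i, M ≤ i → lam i = 0) :
    entryCount T (K + 1) = partSize lam - partSize (muT K lam T) := by
  have hmuM : ∀ i, M ≤ i → muT K lam T i = 0 := by
    intro i hi
    have := muT_le K lam T i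
    rw [hM i hi] at this
    omega
  have hsub : shapeF M (muT K lam T) ⊆ shapeF M lam := by
    intro p hp
    rw [mem_shapeF] at hp ⊢
    exact ⟨hp.1, lt_of_lt_of_le hp.2 (muT_le K lam T p.1)⟩
  have hset : {p : ℕ × ℕ | T p = K + 1} = ↑(shapeF M lam \ shapeF M (muT K lam T)) := by
    ext p
    simp only [Set.mem_setOf_eq, coe_sdiff, Set.mem_diff, mem_coe, mem_shapeF]
    constructor
    · intro h
      have hsh : p.2 < lam p.1 := by
        by_contra hc
        have : T p = 0 := hT.1.2.1 p (by rw [inShape_iff]; exact hc)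
        omega
      have hpM : p.1 < M := by
        by_contra hc
        have := hM p.1 (le_of_not_gt hc)
        omega
      have : ¬ T p ≤ K := by omega
      refine ⟨⟨hpM, hsh⟩, fun hc => this ((mem_muT hT hsh).mpr hc.2)⟩
    · rintro ⟨⟨hpM, hsh⟩, hpn⟩
      have h1 : ¬ p.2 < muT K lam T p.1 := fun hc => hpn ⟨hpM, hc⟩
      have h2 : ¬ T p ≤ K := fun hc => h1 ((mem_muT hT hsh).mp hc)
      have := hT.2 p
      omega
  rw [entryCount, hset, Set.ncard_coe_finset, card_sdiff_of_subset hsub, card_shapeF, card_shapeF,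
    partSize_eq hM, partSize_eq hmuM]

lemma weight_factor {N K : ℕ} (hK : K < N) {lam : ℕ → ℕ} {T : (ℕ × ℕ) → ℕ}
    (hT : T ∈ SSet (K + 1) lam) {M : ℕ} (hM : ∀ i, M ≤ i → lam i = 0) :
    tabWeight N T = tabWeight N (restr K T) *
      (X (⟨K, hK⟩ : Fin N)) ^ (partSize lam - partSize (muT K lam T)) := by
  have hbr : ∀ p, restr K T p ≤ K := by
    intro p; rw [restr]; split <;> omega
  have hKval : ((⟨K, hK⟩ : Fin N) : ℕ) = K := rfl
  rw [tabWeight, tabWeight,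
    ← Finset.mul_prod_erase univ
      (fun i : Fin N => (X i : MvPolynomial (Fin N) ℤ) ^ entryCount T (i.val + 1))
      (mem_univ (⟨K, hK⟩ : Fin N)),
    ← Finset.mul_prod_erase univ
      (fun i : Fin N => (X i : MvPolynomial (Fin N) ℤ) ^ entryCount (restr K T) (i.val + 1))
      (mem_univ (⟨K, hK⟩ : Fin N))]
  simp only [hKval]
  have h1 : entryCount T (K + 1) = partSize lam - partSize (muT K lam T) :=
    count_top hT hM
  have h2 : entryCount (restr K T) (K + 1) = 0 :=
    count_zero_of_gt hbr (by omega)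
  have h3 : ∏ i ∈ univ.erase (⟨K, hK⟩ : Fin N),
        (X i : MvPolynomial (Fin N) ℤ) ^ entryCount T (i.val + 1) =
      ∏ i ∈ univ.erase (⟨K, hK⟩ : Fin N),
        (X i : MvPolynomial (Fin N) ℤ) ^ entryCount (restr K T) (i.val + 1) := by
    refine Finset.prod_congr rfl fun i hi => ?_
    have hne : i ≠ (⟨K, hK⟩ : Fin N) := (Finset.mem_erase.mp hi).1
    have hvne : i.val ≠ K := fun hc => hne (Fin.ext hc)
    by_cases hlt : i.val < K
    · rw [count_restr (by omega) (by omega)]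
    · rw [count_zero_of_gt hT.2 (by omega), count_zero_of_gt hbr (by omega)]
  rw [h1, h2, h3]
  ring

end PieriAux
namespace PieriAux

open Finset

/-! ### Branching rule: the extension map and the bijection -/

lemma extT_apply (K : ℕ) (lam mu : ℕ → ℕ) (S : (ℕ × ℕ) → ℕ) (i j : ℕ) :
    extT K lam mu S (i, j) = if j < lam i then (if j < mu i then S (i, j) else K + 1) else 0 :=
  rfl

lemma extT_mem {K : ℕ} {lam mu : ℕ → ℕ} (hlam : IsPartition lam) (hmu : mu ∈ Br lam)
    {S : (ℕ × ℕ) → ℕ} (hS : S ∈ SSet K mu) : extT K lam mu S ∈ SSet (K + 1) lam := by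
  obtain ⟨hmup, hmule, hmusk⟩ := hmu
  refine ⟨⟨?_, ?_, ?_, ?_⟩, ?_⟩
  · rintro ⟨i, j⟩ hp
    rw [inShape_iff] at hp
    rw [extT_apply, if_pos hp]
    by_cases h2 : j < mu i
    · rw [if_pos h2]
      exact hS.1.1 (i, j) (by rw [inShape_iff]; exact h2)
    · rw [if_neg h2]; omega
  · rintro ⟨i, j⟩ hp
    rw [inShape_iff] at hp
    rw [extT_apply, if_neg hp]
  · intro i j j' h1 hjj h2
    rw [inShape_iff] at h1 h2
    rw [extT_apply, extT_apply, if_pos h1, if_pos h2]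
    by_cases hj2 : j' < mu i
    · have hj1 : j < mu i := by omega
      rw [if_pos hj1, if_pos hj2]
      exact hS.1.2.2.1 i j j' (by rw [inShape_iff]; exact hj1) hjj
        (by rw [inShape_iff]; exact hj2)
    · rw [if_neg hj2]
      by_cases hj1 : j < mu i
      · rw [if_pos hj1]
        have := hS.2 (i, j)
        omega
      · rw [if_neg hj1]
  · intro i j h1 h2
    rw [inShape_iff] at h1 h2
    rw [extT_apply, extT_apply, if_pos h1, if_pos h2]
    by_cases hj2 : j < mu (i + 1)
    · have hj1 : j < mu i := lt_of_lt_of_le hj2 (hmup.1 (by omega))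
      rw [if_pos hj1, if_pos hj2]
      exact hS.1.2.2.2 i j (by rw [inShape_iff]; exact hj1) (by rw [inShape_iff]; exact hj2)
    · rw [if_neg hj2]
      by_cases hj1 : j < mu i
      · rw [if_pos hj1]
        have := hS.2 (i, j)
        omega
      · exfalso
        have h1' : j < lam i := h1
        have h2' : j < lam (i + 1) := h2
        have := hmusk i
        omega
  · rintro ⟨i, j⟩
    rw [extT_apply]
    split
    · split
      · have := hS.2 (i, j); omega
      · omega
    · omega

lemma muT_extT {K : ℕ} {lam mu : ℕ → ℕ} (hmu : mu ∈ Br lam)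
    {S : (ℕ × ℕ) → ℕ} (hS : S ∈ SSet K mu) : muT K lam (extT K lam mu S) = mu := by
  funext i
  rw [muT]
  have heq : (Finset.range (lam i)).filter (fun j => extT K lam mu S (i, j) ≤ K) =
      Finset.range (mu i) := by
    ext j
    simp only [mem_filter, mem_range]
    constructor
    · rintro ⟨hj, hle⟩
      by_contra hc
      rw [extT_apply, if_pos hj, if_neg hc] at hle
      omega
    · intro hj
      have hjl : j < lam i := lt_of_lt_of_le hj (hmu.2.1 i)
      refine ⟨hjl, ?_⟩
      rw [extT_apply, if_pos hjl, if_pos hj]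
      exact hS.2 (i, j)
  rw [heq, card_range]

lemma restr_extT {K : ℕ} {lam mu : ℕ → ℕ} (hmu : mu ∈ Br lam)
    {S : (ℕ × ℕ) → ℕ} (hS : S ∈ SSet K mu) : restr K (extT K lam mu S) = S := by
  funext p
  obtain ⟨i, j⟩ := p
  rw [restr]
  by_cases h1 : j < lam i
  · by_cases h2 : j < mu i
    · rw [extT_apply, if_pos h1, if_pos h2, if_pos (hS.2 (i, j))]
    · rw [extT_apply, if_pos h1, if_neg h2, if_neg (by omega)]
      exact (hS.1.2.1 (i, j) (by rw [inShape_iff]; exact h2)).symm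
  · rw [extT_apply, if_neg h1, if_pos (Nat.zero_le K)]
    have h2 : ¬ j < mu i := fun hc => h1 (lt_of_lt_of_le hc (hmu.2.1 i))
    exact (hS.1.2.1 (i, j) (by rw [inShape_iff]; exact h2)).symm

lemma extT_restr {K : ℕ} {lam : ℕ → ℕ} {T : (ℕ × ℕ) → ℕ} (hT : T ∈ SSet (K + 1) lam) :
    extT K lam (muT K lam T) (restr K T) = T := by
  funext p
  obtain ⟨i, j⟩ := p
  by_cases h1 : j < lam i
  · by_cases h2 : j < muT K lam T i
    · rw [extT_apply, if_pos h1, if_pos h2, restr,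
        if_pos (shape_muT hT (p := (i, j)) h2).2]
    · rw [extT_apply, if_pos h1, if_neg h2]
      have h3 : ¬ T (i, j) ≤ K := fun hc => h2 ((mem_muT hT h1).mp hc)
      have := hT.2 (i, j)
      omega
  · rw [extT_apply, if_neg h1]
    exact (hT.1.2.1 (i, j) (by rw [inShape_iff]; exact h1)).symm

/-- The branching rule for Schur polynomials with bounded entries. -/
theorem branch (N K : ℕ) (hK : K < N) {lam : ℕ → ℕ} (hlam : IsPartition lam) :
    sch N (K + 1) lam = ∑ᶠ mu ∈ Br lam, sch N K mu *
      (X (⟨K, hK⟩ : Fin N) : MvPolynomial (Fin N) ℤ) ^ (partSize lam - partSize mu) := by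
  obtain ⟨M, hM⟩ := hlam.2
  rw [finsum_mem_eq_fsetOf_sum (finite_Br hM), sch_eq_sum N (K + 1) ⟨M, hM⟩]
  have hstep : ∀ mu ∈ fsetOf (Br lam),
      sch N K mu * (X (⟨K, hK⟩ : Fin N) : MvPolynomial (Fin N) ℤ) ^
        (partSize lam - partSize mu) =
      ∑ S ∈ fsetOf (SSet K mu), tabWeight N S *
        (X (⟨K, hK⟩ : Fin N) : MvPolynomial (Fin N) ℤ) ^ (partSize lam - partSize mu) := by
    intro mu hmu
    rw [sch_eq_sum N K (mem_of_mem_fsetOf hmu).1.2, Finset.sum_mul]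
  rw [Finset.sum_congr rfl hstep, Finset.sum_sigma']
  refine Finset.sum_nbij' (fun T => ⟨muT K lam T, restr K T⟩) (fun x => extT K lam x.1 x.2)
    ?_ ?_ ?_ ?_ ?_
  · intro T hT
    have hT' := mem_of_mem_fsetOf hT
    have hmu := muT_mem_Br hT' hlam
    have hmuM : ∀ i, M ≤ i → muT K lam T i = 0 := by
      intro i hi
      have h1 := hmu.2.1 i
      rw [hM i hi] at h1
      omega
    rw [Finset.mem_sigma]
    exact ⟨(mem_fsetOf (finite_Br hM)).mpr hmu,
      (mem_fsetOf (finite_SSet K hmuM)).mpr (restr_mem_SSet hT')⟩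
  · intro x hx
    rw [Finset.mem_sigma] at hx
    have hmu := mem_of_mem_fsetOf hx.1
    have hS := mem_of_mem_fsetOf hx.2
    exact (mem_fsetOf (finite_SSet (K + 1) hM)).mpr (extT_mem hlam hmu hS)
  · intro T hT
    exact extT_restr (mem_of_mem_fsetOf hT)
  · intro x hx
    rw [Finset.mem_sigma] at hx
    have hmu := mem_of_mem_fsetOf hx.1
    have hS := mem_of_mem_fsetOf hx.2
    show (⟨muT K lam (extT K lam x.1 x.2), restr K (extT K lam x.1 x.2)⟩ :
      (_ : ℕ → ℕ) × ((ℕ × ℕ) → ℕ)) = x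
    rw [muT_extT hmu hS, restr_extT hmu hS]
  · intro T hT
    exact weight_factor hK (mem_of_mem_fsetOf hT) hM

end PieriAux
namespace PieriAux

open Finset

/-! ### The combinatorial bijection on partitions -/

/-- Inverse map of the Pieri bijection. -/
def muOf (lam nu rho : ℕ → ℕ) : ℕ → ℕ :=
  fun i => max (lam (i + 1)) (rho (i + 1)) + min (lam i) (rho i) - nu (i + 1)

/-- Forward map of the Pieri bijection. -/
noncomputable def nuOf (lam : ℕ → ℕ) (r : ℕ) (mu rho : ℕ → ℕ) : ℕ → ℕ := fun i =>
  match i with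
  | 0 => r + partSize mu + max (lam 0) (rho 0) - partSize rho
  | j + 1 => max (lam (j + 1)) (rho (j + 1)) + min (lam j) (rho j) - mu j

lemma sum_id {M : ℕ} (lam rho mu nu : ℕ → ℕ)
    (hb : ∀ i, max (lam (i + 1)) (rho (i + 1)) ≤ mu i ∧ mu i ≤ min (lam i) (rho i))
    (hnu : ∀ i, nu (i + 1) + mu i = max (lam (i + 1)) (rho (i + 1)) + min (lam i) (rho i))
    (hMl : ∀ i, M ≤ i → lam i = 0) (hMr : ∀ i, M ≤ i → rho i = 0) :
    (∑ i ∈ range M, nu (i + 1)) + partSize mu + max (lam 0) (rho 0)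
      = partSize lam + partSize rho := by
  have h1 : ∑ i ∈ range M, (nu (i + 1) + mu i) =
      ∑ i ∈ range M, (max (lam (i + 1)) (rho (i + 1)) + min (lam i) (rho i)) :=
    Finset.sum_congr rfl fun i _ => hnu i
  rw [Finset.sum_add_distrib, Finset.sum_add_distrib] at h1
  have h2 : ∑ i ∈ range (M + 1), max (lam i) (rho i) =
      (∑ i ∈ range M, max (lam (i + 1)) (rho (i + 1))) + max (lam 0) (rho 0) := by
    rw [Finset.sum_range_succ']
  have h3 : ∑ i ∈ range (M + 1), min (lam i) (rho i) =
      (∑ i ∈ range M, min (lam i) (rho i)) + min (lam M) (rho M) := by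
    rw [Finset.sum_range_succ]
  have h4 : min (lam M) (rho M) = 0 := by rw [hMl M le_rfl]; simp
  have h5 : ∑ i ∈ range (M + 1), (max (lam i) (rho i) + min (lam i) (rho i)) =
      (∑ i ∈ range (M + 1), lam i) + ∑ i ∈ range (M + 1), rho i := by
    rw [← Finset.sum_add_distrib]
    exact Finset.sum_congr rfl fun i _ => by omega
  rw [Finset.sum_add_distrib] at h5
  have h6 : partSize lam = ∑ i ∈ range (M + 1), lam i :=
    partSize_eq fun i hi => hMl i (by omega)
  have h7 : partSize rho = ∑ i ∈ range (M + 1), rho i :=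
    partSize_eq fun i hi => hMr i (by omega)
  have h8 : partSize mu = ∑ i ∈ range M, mu i := by
    refine partSize_eq fun i hi => ?_
    have := (hb i).2
    have := hMl i hi
    have := hMr i hi
    omega
  omega

lemma forward {lam mu rho : ℕ → ℕ} {k r : ℕ} (hlam : IsPartition lam) (hmu : mu ∈ Br lam)
    (hk : k ≤ r) (hrho : rho ∈ HS mu k) :
    nuOf lam r mu rho ∈ HS lam r ∧ rho ∈ Br (nuOf lam r mu rho) ∧
      muOf lam (nuOf lam r mu rho) rho = mu := by
  obtain ⟨⟨hmua, Mmu, hMmu⟩, hmle, hlsk⟩ := hmu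
  obtain ⟨⟨hra, Mr, hMr⟩, hmr, hsz, hrsk⟩ := hrho
  obtain ⟨hla, Ml, hMl⟩ := hlam
  set nu := nuOf lam r mu rho with hnu
  set M := max Ml Mr with hMdef
  have hMl' : ∀ i, M ≤ i → lam i = 0 := fun i hi => hMl i (by omega)
  have hMr' : ∀ i, M ≤ i → rho i = 0 := fun i hi => hMr i (by omega)
  have hb : ∀ i, max (lam (i + 1)) (rho (i + 1)) ≤ mu i ∧ mu i ≤ min (lam i) (rho i) := by
    intro i
    have := hlsk i; have := hrsk i; have := hmle i; have := hmr i
    omega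
  have hsucceq : ∀ i, nu (i + 1) =
      max (lam (i + 1)) (rho (i + 1)) + min (lam i) (rho i) - mu i := fun i => rfl
  have hsucc : ∀ i, nu (i + 1) + mu i =
      max (lam (i + 1)) (rho (i + 1)) + min (lam i) (rho i) := by
    intro i
    rw [hsucceq i]
    have := hb i
    omega
  have hnu0 : nu 0 = r + partSize mu + max (lam 0) (rho 0) - partSize rho := rfl
  have hb' : ∀ i, max (lam (i + 1)) (rho (i + 1)) ≤ nu (i + 1) ∧
      nu (i + 1) ≤ min (lam i) (rho i) := by
    intro i
    have := hsucc i; have := hb i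
    omega
  have hnu0' : max (lam 0) (rho 0) ≤ nu 0 ∧
      nu 0 + partSize rho = r + partSize mu + max (lam 0) (rho 0) := by
    rw [hnu0]
    omega
  have hMnu : ∀ i, M + 1 ≤ i → nu i = 0 := by
    intro i hi
    obtain ⟨j, rfl⟩ : ∃ j, i = j + 1 := ⟨i - 1, by omega⟩
    have h1 := hsucc j
    have h2 := hMl' j (by omega)
    have h3 := hMr' j (by omega)
    have h4 := hMl' (j + 1) (by omega)
    have h5 := hMr' (j + 1) (by omega)
    have h6 := (hb j).2
    omega
  have hnupart : IsPartition nu := by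
    refine ⟨antitone_nat_of_succ_le fun i => ?_, M + 1, hMnu⟩
    match i with
    | 0 =>
      have := hb' 0
      have := hnu0'.1
      omega
    | j + 1 =>
      have := hb' (j + 1)
      have := hb' j
      omega
  have hsum := sum_id lam rho mu nu hb hsucc hMl' hMr'
  have hA : partSize nu = (∑ i ∈ range M, nu (i + 1)) + nu 0 := by
    rw [partSize_eq hMnu]
    rw [Finset.sum_range_succ']
  have hsize : partSize nu = partSize lam + r := by omega
  refine ⟨⟨hnupart, ?_, hsize, ?_⟩, ⟨⟨hra, Mr, hMr⟩, ?_, ?_⟩, ?_⟩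
  · intro i
    match i with
    | 0 => have := hnu0'.1; omega
    | j + 1 => have := (hb' j).1; omega
  · intro i
    have := (hb' i).2
    omega
  · intro i
    match i with
    | 0 => have := hnu0'.1; omega
    | j + 1 => have := (hb' j).1; omega
  · intro i
    have := (hb' i).2
    omega
  · funext i
    have h1 : muOf lam nu rho i =
        max (lam (i + 1)) (rho (i + 1)) + min (lam i) (rho i) - nu (i + 1) := rfl
    have h2 := hsucc i
    have h3 := hb i
    omega

lemma backward {lam nu rho : ℕ → ℕ} {r : ℕ} (hlam : IsPartition lam) (hnu : nu ∈ HS lam r)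
    (hrho : rho ∈ Br nu) :
    muOf lam nu rho ∈ Br lam ∧
      rho ∈ HS (muOf lam nu rho) (partSize rho - partSize (muOf lam nu rho)) ∧
      partSize rho - partSize (muOf lam nu rho) ≤ r ∧
      nuOf lam r (muOf lam nu rho) rho = nu := by
  obtain ⟨⟨hnua, Mn, hMn⟩, hlle, hsize, hnsk⟩ := hnu
  obtain ⟨⟨hra, Mr, hMr⟩, hrle, hnrsk⟩ := hrho
  obtain ⟨hla, Ml, hMl⟩ := hlam
  set mu := muOf lam nu rho with hmu
  set M := max Ml (max Mr Mn) with hMdef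
  have hMl' : ∀ i, M ≤ i → lam i = 0 := fun i hi => hMl i (by omega)
  have hMr' : ∀ i, M ≤ i → rho i = 0 := fun i hi => hMr i (by omega)
  have hMn' : ∀ i, M ≤ i → nu i = 0 := fun i hi => hMn i (by omega)
  have hb : ∀ i, max (lam (i + 1)) (rho (i + 1)) ≤ nu (i + 1) ∧
      nu (i + 1) ≤ min (lam i) (rho i) := by
    intro i
    have := hlle (i + 1); have := hrle (i + 1); have := hnsk i; have := hnrsk i
    omega
  have hmueq : ∀ i, mu i =
      max (lam (i + 1)) (rho (i + 1)) + min (lam i) (rho i) - nu (i + 1) := fun i => rfl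
  have hmusum : ∀ i, nu (i + 1) + mu i =
      max (lam (i + 1)) (rho (i + 1)) + min (lam i) (rho i) := by
    intro i
    rw [hmueq i]
    have := hb i
    omega
  have hbmu : ∀ i, max (lam (i + 1)) (rho (i + 1)) ≤ mu i ∧ mu i ≤ min (lam i) (rho i) := by
    intro i
    have := hmusum i; have := hb i
    omega
  have hMmu : ∀ i, M ≤ i → mu i = 0 := by
    intro i hi
    have := (hbmu i).2
    have := hMl' i hi
    omega
  have hmupart : IsPartition mu := by
    refine ⟨antitone_nat_of_succ_le fun i => ?_, M, hMmu⟩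
    have := (hbmu (i + 1)).2
    have := (hbmu i).1
    omega
  have hsum := sum_id lam rho mu nu hbmu hmusum hMl' hMr'
  have hA : partSize nu = (∑ i ∈ range M, nu (i + 1)) + nu 0 := by
    rw [partSize_eq (M := M + 1) fun i hi => hMn' i (by omega)]
    rw [Finset.sum_range_succ']
  have hnu0ge : max (lam 0) (rho 0) ≤ nu 0 := by
    have := hlle 0; have := hrle 0
    omega
  have hUC : partSize rho ≤ partSize mu + r := by omega
  have hUle : partSize mu ≤ partSize rho := by
    refine partSize_mono (fun i => (hbmu i).2.trans (min_le_right _ _)) hMr'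
  refine ⟨⟨hmupart, fun i => ?_, fun i => ?_⟩,
    ⟨⟨hra, Mr, hMr⟩, fun i => ?_, by omega, fun i => ?_⟩, by omega, ?_⟩
  · have := (hbmu i).2; omega
  · have := (hbmu i).1; omega
  · have := (hbmu i).2; omega
  · have := (hbmu i).1; omega
  · funext i
    match i with
    | 0 =>
      have h1 : nuOf lam r mu rho 0 =
          r + partSize mu + max (lam 0) (rho 0) - partSize rho := rfl
      omega
    | j + 1 =>
      have h1 : nuOf lam r mu rho (j + 1) =
          max (lam (j + 1)) (rho (j + 1)) + min (lam j) (rho j) - mu j := rfl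
      have h2 := hmusum j
      have h3 := hb j
      omega

end PieriAux
namespace PieriAux

open Finset

/-! ### Small computations -/

lemma oneRow_partition (r : ℕ) : IsPartition (oneRow r) := by
  constructor
  · intro a b hab
    by_cases hb : b = 0
    · subst hb
      have : a = 0 := by omega
      subst this
      exact le_rfl
    · simp only [oneRow, if_neg hb]
      exact Nat.zero_le _
  · exact ⟨1, fun i hi => if_neg (by omega)⟩

lemma partSize_oneRow (r : ℕ) : partSize (oneRow r) = r := by
  have h : ∀ i, 1 ≤ i → oneRow r i = 0 := fun i hi => if_neg (by omega)
  rw [partSize_eq h]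
  simp [oneRow]

lemma oneRow_zero : oneRow 0 = fun _ => 0 := by
  funext i
  simp [oneRow]

lemma oneRow_injOn (r : ℕ) : Set.InjOn oneRow (Set.Iic r) := by
  intro a _ b _ h
  have := congrFun h 0
  simpa [oneRow] using this

lemma Br_oneRow (r : ℕ) : Br (oneRow r) = oneRow '' Set.Iic r := by
  ext mu
  constructor
  · rintro ⟨hmup, hle, _⟩
    refine ⟨mu 0, ?_, ?_⟩
    · have := hle 0
      simpa [oneRow] using this
    · funext i
      rcases i with _ | j
      · simp [oneRow]
      · have h1 := hle (j + 1)
        simp only [oneRow, if_neg (by omega : ¬ j + 1 = 0)] at h1 ⊢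
        omega
  · rintro ⟨k, hk, rfl⟩
    simp only [Set.mem_Iic] at hk
    refine ⟨oneRow_partition k, fun i => ?_, fun i => ?_⟩
    · simp only [oneRow]
      split <;> omega
    · simp only [oneRow, if_neg (by omega : ¬ i + 1 = 0)]
      exact Nat.zero_le _

lemma SSet_bot (K : ℕ) : SSet K (fun _ => 0) = {fun _ => 0} := by
  ext T
  simp only [SSet, Set.mem_setOf_eq, Set.mem_singleton_iff]
  constructor
  · rintro ⟨hss, -⟩
    funext p
    exact hss.2.1 p (by rw [inShape_iff]; omega)
  · rintro rfl
    refine ⟨⟨?_, ?_, ?_, ?_⟩, fun p => Nat.zero_le K⟩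
    · intro p hp
      rw [inShape_iff] at hp
      omega
    · intro _ _
      rfl
    · intro i j j' h1 _ _
      exact le_rfl
    · intro i j h1 _
      rw [inShape_iff] at h1
      omega

lemma tabWeight_bot (N : ℕ) : tabWeight N (fun _ => 0) = 1 := by
  rw [tabWeight]
  refine Finset.prod_eq_one fun i _ => ?_
  have h : entryCount (fun _ => 0) (i.val + 1) = 0 := by
    rw [entryCount]
    have : {p : ℕ × ℕ | (fun _ => 0) p = i.val + 1} = ∅ := by
      ext p
      simp
    rw [this, Set.ncard_empty]
  rw [h, pow_zero]

lemma sch_bot (N K : ℕ) : sch N K (fun _ => 0) = 1 := by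
  rw [sch, SSet_bot, finsum_mem_singleton, tabWeight_bot]

lemma sch_zero_of_pos (N : ℕ) {lam : ℕ → ℕ} (h : 1 ≤ lam 0) : sch N 0 lam = 0 := by
  have hempty : SSet 0 lam = ∅ := by
    refine Set.eq_empty_iff_forall_notMem.mpr fun T hT => ?_
    have h1 := hT.1.1 (0, 0) (by rw [inShape_iff]; exact h)
    have h2 := hT.2 (0, 0)
    omega
  rw [sch, hempty, finsum_mem_empty]

lemma HS_self {lam : ℕ → ℕ} (hlam : IsPartition lam) : HS lam 0 = {lam} := by
  ext nu
  constructor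
  · rintro ⟨hnup, hle, hsz, -⟩
    obtain ⟨Ml, hMl⟩ := hlam.2
    obtain ⟨Mn, hMn⟩ := hnup.2
    set M := max Ml Mn with hM
    have e1 : partSize lam = ∑ i ∈ range M, lam i :=
      partSize_eq fun i hi => hMl i (by omega)
    have e2 : partSize nu = ∑ i ∈ range M, nu i :=
      partSize_eq fun i hi => hMn i (by omega)
    have heq : ∀ i ∈ range M, lam i = nu i := by
      refine (Finset.sum_eq_sum_iff_of_le fun i _ => hle i).mp ?_
      omega
    show nu = lam
    funext i
    by_cases hi : i < M
    · exact (heq i (mem_range.mpr hi)).symm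
    · rw [hMl i (by omega), hMn i (by omega)]
  · rintro rfl
    exact ⟨hlam, fun i => le_rfl, by omega, fun i => hlam.1 (by omega)⟩

lemma nu_pos_of_HS {lam nu : ℕ → ℕ} {r : ℕ} (hr : 1 ≤ r) (hnu : nu ∈ HS lam r) :
    1 ≤ nu 0 := by
  obtain ⟨hnup, _, hsz, _⟩ := hnu
  by_contra hc
  have h0 : nu 0 = 0 := by omega
  have hz : ∀ i, (0 : ℕ) ≤ i → nu i = 0 := by
    intro i _
    have := hnup.1 (Nat.zero_le i)
    omega
  have : partSize nu = ∑ i ∈ range 0, nu i := partSize_eq fun i hi => hz i (by omega)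
  simp at this
  have hlam0 : (0:ℕ) ≤ partSize lam := Nat.zero_le _
  omega

/-! ### The key reindexing identity -/

lemma key_bij {N : ℕ} {lam : ℕ → ℕ} (hlam : IsPartition lam) (r : ℕ)
    (g : (ℕ → ℕ) → MvPolynomial (Fin N) ℤ) :
    ∑ k ∈ Finset.Iic r, ∑ mu ∈ fsetOf (Br lam), ∑ rho ∈ fsetOf (HS mu k), g rho =
      ∑ nu ∈ fsetOf (HS lam r), ∑ rho ∈ fsetOf (Br nu), g rho := by
  obtain ⟨Ml, hMl⟩ := hlam.2
  have hL : ∑ k ∈ Finset.Iic r, ∑ mu ∈ fsetOf (Br lam), ∑ rho ∈ fsetOf (HS mu k), g rho =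
      ∑ x ∈ (Finset.Iic r).sigma (fun k => (fsetOf (Br lam)).sigma fun mu => fsetOf (HS mu k)),
        g x.2.2 := by
    rw [Finset.sum_sigma]
    exact Finset.sum_congr rfl fun k _ => by rw [Finset.sum_sigma]
  have hR : ∑ nu ∈ fsetOf (HS lam r), ∑ rho ∈ fsetOf (Br nu), g rho =
      ∑ y ∈ (fsetOf (HS lam r)).sigma (fun nu => fsetOf (Br nu)), g y.2 := by
    rw [Finset.sum_sigma]
  rw [hL, hR]
  refine Finset.sum_nbij' (fun x => ⟨nuOf lam r x.2.1 x.2.2, x.2.2⟩)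
    (fun y => ⟨partSize y.2 - partSize (muOf lam y.1 y.2), muOf lam y.1 y.2, y.2⟩)
    ?_ ?_ ?_ ?_ ?_
  · rintro ⟨k, mu, rho⟩ hx
    rw [Finset.mem_sigma, Finset.mem_sigma] at hx
    obtain ⟨hk, hmu, hrho⟩ := hx
    rw [Finset.mem_Iic] at hk
    obtain ⟨hHS, hBr, -⟩ :=
      forward hlam (mem_of_mem_fsetOf hmu) hk (mem_of_mem_fsetOf hrho)
    obtain ⟨Mn, hMn⟩ := hHS.1.2
    rw [Finset.mem_sigma]
    exact ⟨(mem_fsetOf (finite_HS lam r)).mpr hHS, (mem_fsetOf (finite_Br hMn)).mpr hBr⟩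
  · rintro ⟨nu, rho⟩ hy
    rw [Finset.mem_sigma] at hy
    obtain ⟨hnu, hrho⟩ := hy
    obtain ⟨hBr, hHS, hkr, -⟩ :=
      backward hlam (mem_of_mem_fsetOf hnu) (mem_of_mem_fsetOf hrho)
    rw [Finset.mem_sigma, Finset.mem_sigma]
    exact ⟨Finset.mem_Iic.mpr hkr, (mem_fsetOf (finite_Br hMl)).mpr hBr,
      (mem_fsetOf (finite_HS _ _)).mpr hHS⟩
  · rintro ⟨k, mu, rho⟩ hx
    rw [Finset.mem_sigma, Finset.mem_sigma] at hx
    obtain ⟨hk, hmu, hrho⟩ := hx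
    rw [Finset.mem_Iic] at hk
    have hrho' := mem_of_mem_fsetOf hrho
    obtain ⟨-, -, hmuOf⟩ :=
      forward hlam (mem_of_mem_fsetOf hmu) hk hrho'
    show (⟨partSize rho - partSize (muOf lam (nuOf lam r mu rho) rho),
      muOf lam (nuOf lam r mu rho) rho, rho⟩ :
        (_ : ℕ) × (_ : ℕ → ℕ) × (ℕ → ℕ)) = ⟨k, mu, rho⟩
    rw [hmuOf]
    have hsz : partSize rho = partSize mu + k := hrho'.2.2.1
    have hkk : partSize rho - partSize mu = k := by omega
    rw [hkk]
  · rintro ⟨nu, rho⟩ hy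
    rw [Finset.mem_sigma] at hy
    obtain ⟨hnu, hrho⟩ := hy
    obtain ⟨-, -, -, hnuOf⟩ :=
      backward hlam (mem_of_mem_fsetOf hnu) (mem_of_mem_fsetOf hrho)
    show (⟨nuOf lam r (muOf lam nu rho) rho, rho⟩ : (_ : ℕ → ℕ) × (ℕ → ℕ)) = ⟨nu, rho⟩
    rw [hnuOf]
  · rintro ⟨k, mu, rho⟩ _
    rfl

/-! ### The Pieri rule for bounded-entry Schur polynomials -/

theorem pieri_sch (N : ℕ) : ∀ K, K ≤ N → ∀ (r : ℕ) (lam : ℕ → ℕ), IsPartition lam →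
    sch N K (oneRow r) * sch N K lam = ∑ᶠ nu ∈ HS lam r, sch N K nu := by
  intro K
  induction K with
  | zero =>
    intro _ r lam hlam
    rcases r with _ | n
    · rw [oneRow_zero, sch_bot, one_mul, HS_self hlam, finsum_mem_singleton]
    · have h1 : sch N 0 (oneRow (n + 1)) = 0 :=
        sch_zero_of_pos N (by simp [oneRow])
      rw [h1, zero_mul, finsum_mem_eq_fsetOf_sum (finite_HS lam (n + 1))]
      symm
      refine Finset.sum_eq_zero fun nu hnu => ?_
      exact sch_zero_of_pos N (nu_pos_of_HS (by omega) (mem_of_mem_fsetOf hnu))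
  | succ K ih =>
    intro hKN r lam hlam
    have hK : K < N := hKN
    have ihK := ih (le_of_lt hK)
    obtain ⟨Ml, hMl⟩ := hlam.2
    have e1 : sch N (K + 1) (oneRow r) =
        ∑ k ∈ Finset.Iic r, sch N K (oneRow k) *
          (X (⟨K, hK⟩ : Fin N) : MvPolynomial (Fin N) ℤ) ^ (r - k) := by
      rw [branch N K hK (oneRow_partition r), Br_oneRow,
        finsum_mem_image (oneRow_injOn r), ← Finset.coe_Iic, finsum_mem_coe_finset]
      exact Finset.sum_congr rfl fun k _ => by rw [partSize_oneRow, partSize_oneRow]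
    have e2 : sch N (K + 1) lam =
        ∑ mu ∈ fsetOf (Br lam), sch N K mu *
          (X (⟨K, hK⟩ : Fin N) : MvPolynomial (Fin N) ℤ) ^ (partSize lam - partSize mu) := by
      rw [branch N K hK hlam, finsum_mem_eq_fsetOf_sum (finite_Br hMl)]
    have e3 : ∀ k ∈ Finset.Iic r, ∀ mu ∈ fsetOf (Br lam),
        (sch N K (oneRow k) * (X (⟨K, hK⟩ : Fin N) : MvPolynomial (Fin N) ℤ) ^ (r - k)) *
          (sch N K mu * (X (⟨K, hK⟩ : Fin N) : MvPolynomial (Fin N) ℤ) ^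
            (partSize lam - partSize mu)) =
        ∑ rho ∈ fsetOf (HS mu k), sch N K rho *
          (X (⟨K, hK⟩ : Fin N) : MvPolynomial (Fin N) ℤ) ^
            (partSize lam + r - partSize rho) := by
      intro k hk mu hmu
      rw [Finset.mem_Iic] at hk
      have hmu' := mem_of_mem_fsetOf hmu
      have h4 : sch N K (oneRow k) * sch N K mu = ∑ rho ∈ fsetOf (HS mu k), sch N K rho := by
        rw [ihK k mu hmu'.1, finsum_mem_eq_fsetOf_sum (finite_HS mu k)]
      calc (sch N K (oneRow k) * (X (⟨K, hK⟩ : Fin N) : MvPolynomial (Fin N) ℤ) ^ (r - k)) *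
            (sch N K mu * (X (⟨K, hK⟩ : Fin N) : MvPolynomial (Fin N) ℤ) ^
              (partSize lam - partSize mu))
          = (sch N K (oneRow k) * sch N K mu) *
            (X (⟨K, hK⟩ : Fin N) : MvPolynomial (Fin N) ℤ) ^
              ((r - k) + (partSize lam - partSize mu)) := by
            rw [pow_add]; ring
        _ = ∑ rho ∈ fsetOf (HS mu k), sch N K rho *
            (X (⟨K, hK⟩ : Fin N) : MvPolynomial (Fin N) ℤ) ^
              ((r - k) + (partSize lam - partSize mu)) := by
            rw [h4, Finset.sum_mul]
        _ = ∑ rho ∈ fsetOf (HS mu k), sch N K rho *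
            (X (⟨K, hK⟩ : Fin N) : MvPolynomial (Fin N) ℤ) ^
              (partSize lam + r - partSize rho) := by
            refine Finset.sum_congr rfl fun rho hrho => ?_
            have hrho' := mem_of_mem_fsetOf hrho
            have hsz := hrho'.2.2.1
            have hUA : partSize mu ≤ partSize lam := partSize_mono hmu'.2.1 hMl
            have hexp : (r - k) + (partSize lam - partSize mu) =
                partSize lam + r - partSize rho := by omega
            rw [hexp]
    have e5 : ∑ᶠ nu ∈ HS lam r, sch N (K + 1) nu =
        ∑ nu ∈ fsetOf (HS lam r), ∑ rho ∈ fsetOf (Br nu), sch N K rho *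
          (X (⟨K, hK⟩ : Fin N) : MvPolynomial (Fin N) ℤ) ^
            (partSize lam + r - partSize rho) := by
      rw [finsum_mem_eq_fsetOf_sum (finite_HS lam r)]
      refine Finset.sum_congr rfl fun nu hnu => ?_
      have hnu' := mem_of_mem_fsetOf hnu
      obtain ⟨Mn, hMn⟩ := hnu'.1.2
      rw [branch N K hK hnu'.1, finsum_mem_eq_fsetOf_sum (finite_Br hMn)]
      refine Finset.sum_congr rfl fun rho hrho => ?_
      rw [hnu'.2.2.1]
    rw [e1, e2, Finset.sum_mul_sum, e5,
      Finset.sum_congr rfl (fun k hk => Finset.sum_congr rfl fun mu hmu => e3 k hk mu hmu)]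
    exact key_bij hlam r _

end PieriAux

/-- Pieri rule: `s_(r) · s_λ = Σ_ν s_ν`, summed over all partitions `ν ⊇ λ` with
`|ν| = |λ| + r` such that `ν/λ` is a horizontal strip (`ν_{i+1} ≤ λ_i` for all `i`). -/
theorem pieri_rule (N r : ℕ) (hN : 1 ≤ N) (hr : 1 ≤ r)
    (lam : ℕ → ℕ) (hlam : IsPartition lam) :
    schurPoly N (oneRow r) * schurPoly N lam =
      ∑ᶠ nu ∈ {nu : ℕ → ℕ | IsPartition nu ∧ (∀ i, lam i ≤ nu i) ∧
          partSize nu = partSize lam + r ∧ ∀ i, nu (i + 1) ≤ lam i},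
        schurPoly N nu := by
  exact PieriAux.pieri_sch N N le_rfl r lam hlam
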